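/- For η ∈ ℝ consider the 2π-periodic Riccati equation u' = (sin t − 2)u² + η − cos t, and let γ_η(t) := (sin t − 2)(η − cos t) − 3cos²t/(4(sin t − 2)²) − sin t/(2(sin t − 2)) be the function obtained from it by the normalizing change of variables, with mean-centered part γ̂_η. Let μ*(η) denote the unique real number such that the equation x' = x² + γ̂_η(t) + μ has exactly one 2π-periodic solution precisely when μ = μ*(η) (two when μ < μ*(η), none when μ > μ*(η)). Then the function η ↦ μ*(η) is differentiable on ℝ and concave (its graph lies below each of its tangent lines). -/

import Mathlib

open Real

/-- The function `γ_η` obtained from `u' = (sin t − 2)u² + η − cos t` by the normalizing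
change of variables. -/
noncomputable def gammaEta (η : ℝ) : ℝ → ℝ := fun t =>
  (Real.sin t - 2) * (η - Real.cos t) - 3 * Real.cos t ^ 2 / (4 * (Real.sin t - 2) ^ 2) -
    Real.sin t / (2 * (Real.sin t - 2))

/-- The mean-centered part `γ̂_η`. -/
noncomputable def gammaEtaHat (η : ℝ) : ℝ → ℝ := fun t =>
  gammaEta η t - (1 / (2 * Real.pi)) * ∫ s in (0:ℝ)..(2 * Real.pi), gammaEta η s

/-- `φ` is a `2π`-periodic solution of `x' = x² + γ̂_η(t) + μ`. -/
def IsSol (η μ : ℝ) (φ : ℝ → ℝ) : Prop :=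
  (∀ t, HasDerivAt φ (φ t ^ 2 + gammaEtaHat η t + μ) t) ∧
    Function.Periodic φ (2 * Real.pi)

lemma sin_sub_two_ne (t : ℝ) : Real.sin t - 2 ≠ 0 := by
  nlinarith [Real.sin_le_one t, Real.neg_one_le_sin t]

lemma contGamma (η : ℝ) : Continuous (gammaEta η) := by
  unfold gammaEta
  apply Continuous.sub
  apply Continuous.sub
  · fun_prop
  · exact (continuous_const.mul ((Real.continuous_cos).pow 2)).div
      (by fun_prop) (fun t => by have := sin_sub_two_ne t; positivity)
  · exact (Real.continuous_sin).div (by fun_prop)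
      (fun t => mul_ne_zero two_ne_zero (sin_sub_two_ne t))

lemma contHat (η : ℝ) : Continuous (gammaEtaHat η) := (contGamma η).sub continuous_const

lemma primitive_hasDerivAt {f : ℝ → ℝ} (hf : Continuous f) (t : ℝ) :
    HasDerivAt (fun u => ∫ s in (0:ℝ)..u, f s) (f t) t :=
  intervalIntegral.integral_hasDerivAt_right (hf.intervalIntegrable _ _)
    hf.aestronglyMeasurable.stronglyMeasurableAtFilter hf.continuousAt

lemma gamma_sub (η η' t : ℝ) : gammaEta η' t - gammaEta η t = (η' - η) * (Real.sin t - 2) := by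
  unfold gammaEta; ring

lemma integral_sin_sub_two :
    (∫ s in (0:ℝ)..(2*Real.pi), (Real.sin s - 2)) = -(4*Real.pi) := by
  rw [intervalIntegral.integral_sub (Real.continuous_sin.intervalIntegrable _ _)
    (intervalIntegrable_const)]
  rw [integral_sin, intervalIntegral.integral_const]
  simp [Real.cos_two_pi]
  ring

lemma hat_sub (η η' t : ℝ) :
    gammaEtaHat η' t = gammaEtaHat η t + (η' - η) * Real.sin t := by
  have hπ : (2*Real.pi) ≠ 0 := by positivity
  have hint : (∫ s in (0:ℝ)..(2*Real.pi), gammaEta η' s)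
      = (∫ s in (0:ℝ)..(2*Real.pi), gammaEta η s) + (η' - η) * (-(4*Real.pi)) := by
    have h1 : (∫ s in (0:ℝ)..(2*Real.pi), (gammaEta η' s - gammaEta η s))
        = (η' - η) * (-(4*Real.pi)) := by
      rw [show (fun s => gammaEta η' s - gammaEta η s) = fun s => (η'-η) * (Real.sin s - 2) by
        funext s; rw [gamma_sub]]
      rw [intervalIntegral.integral_const_mul, integral_sin_sub_two]
    rw [intervalIntegral.integral_sub ((contGamma η').intervalIntegrable _ _)
      ((contGamma η).intervalIntegrable _ _)] at h1
    linarith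
  have h2 : (1/(2*Real.pi)) * ((η' - η) * (-(4*Real.pi))) = -(2*(η'-η)) := by
    field_simp; ring
  unfold gammaEtaHat
  rw [hint, mul_add, h2]
  have h3 := gamma_sub η η' t
  ring_nf at h3 ⊢
  linarith [h3]

lemma hat_integral (η : ℝ) : (∫ t in (0:ℝ)..(2*Real.pi), gammaEtaHat η t) = 0 := by
  unfold gammaEtaHat
  rw [intervalIntegral.integral_sub ((contGamma η).intervalIntegrable _ _)
    intervalIntegrable_const, intervalIntegral.integral_const]
  have hπ : (2*Real.pi) ≠ 0 := by positivity
  rw [smul_eq_mul, sub_zero]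
  field_simp
  ring

lemma sol_cont {η μ : ℝ} {φ : ℝ → ℝ} (h : IsSol η μ φ) : Continuous φ :=
  continuous_iff_continuousAt.2 fun t => (h.1 t).continuousAt

lemma sol_sq_integral {η μ : ℝ} {φ : ℝ → ℝ} (h : IsSol η μ φ) :
    (∫ t in (0:ℝ)..(2*Real.pi), (φ t)^2) = -(2*Real.pi*μ) := by
  have hc : Continuous φ := sol_cont h
  have hc2 : Continuous fun t => φ t ^ 2 + gammaEtaHat η t + μ :=
    ((hc.pow 2).add (contHat η)).add continuous_const
  have hftc : (∫ t in (0:ℝ)..(2*Real.pi), (φ t ^ 2 + gammaEtaHat η t + μ))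
      = φ (2*Real.pi) - φ 0 :=
    intervalIntegral.integral_eq_sub_of_hasDerivAt (fun t _ => h.1 t)
      (hc2.intervalIntegrable _ _)
  have hper : φ (2*Real.pi) = φ 0 := by
    have := h.2 0; simpa using this
  rw [hper, sub_self] at hftc
  rw [intervalIntegral.integral_add (f := fun t => φ t ^ 2 + gammaEtaHat η t) (g := fun _ => μ)
    (((hc.pow 2).add (contHat η)).intervalIntegrable _ _)
    intervalIntegrable_const, intervalIntegral.integral_add (f := fun t => φ t ^ 2)
    (g := gammaEtaHat η)
    ((hc.pow 2).intervalIntegrable _ _) ((contHat η).intervalIntegrable _ _),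
    hat_integral, intervalIntegral.integral_const] at hftc
  simp at hftc
  linarith

lemma mean_zero_of_unique {η μ : ℝ} {z : ℝ → ℝ} (hz : IsSol η μ z)
    (huniq : ∀ φ, IsSol η μ φ → φ = z) : (∫ s in (0:ℝ)..(2*Real.pi), z s) = 0 := by
  by_contra hI
  set I : ℝ := ∫ s in (0:ℝ)..(2*Real.pi), z s with hIdef
  have hzc : Continuous z := sol_cont hz
  set A : ℝ → ℝ := fun t => 2 * ∫ s in (0:ℝ)..t, z s with hAdef
  have hAd : ∀ t, HasDerivAt A (2 * z t) t := fun t => (primitive_hasDerivAt hzc t).const_mul 2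
  have hAc : Continuous A := by
    apply continuous_iff_continuousAt.2 fun t => (hAd t).continuousAt
  have hA0 : A 0 = 0 := by simp [hAdef]
  set B : ℝ → ℝ := fun t => ∫ s in (0:ℝ)..t, Real.exp (A s) with hBdef
  have heAc : Continuous fun s => Real.exp (A s) := Real.continuous_exp.comp hAc
  have hBd : ∀ t, HasDerivAt B (Real.exp (A t)) t := fun t => primitive_hasDerivAt heAc t
  have hBc : Continuous B := continuous_iff_continuousAt.2 fun t => (hBd t).continuousAt
  have hBmono : StrictMono B := by
    apply strictMono_of_deriv_pos
    intro t
    rw [(hBd t).deriv]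
    exact Real.exp_pos _
  have hB0 : B 0 = 0 := by simp [hBdef]
  have hπ : (0:ℝ) < 2*Real.pi := by positivity
  have hBP : 0 < B (2*Real.pi) := by rw [← hB0]; exact hBmono hπ
  -- periodicity-type identities
  have hAP : ∀ t, A (t + 2*Real.pi) = A t + 2*I := by
    intro t
    have hsplit : (∫ s in (0:ℝ)..(t + 2*Real.pi), z s)
        = (∫ s in (0:ℝ)..t, z s) + ∫ s in t..(t + 2*Real.pi), z s :=
      (intervalIntegral.integral_add_adjacent_intervals (hzc.intervalIntegrable _ _)
        (hzc.intervalIntegrable _ _)).symm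
    have hper : (∫ s in t..(t + 2*Real.pi), z s) = ∫ s in (0:ℝ)..(0 + 2*Real.pi), z s :=
      hz.2.intervalIntegral_add_eq t 0
    simp only [hAdef, hsplit, hper, zero_add, ← hIdef]
    ring
  have hBP' : ∀ t, B (t + 2*Real.pi) = B (2*Real.pi) + Real.exp (2*I) * B t := by
    intro t
    have hsplit : B (t + 2*Real.pi)
        = B (2*Real.pi) + ∫ s in (2*Real.pi)..(t + 2*Real.pi), Real.exp (A s) :=
      (intervalIntegral.integral_add_adjacent_intervals (heAc.intervalIntegrable _ _)
        (heAc.intervalIntegrable _ _)).symm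
    have hshift : (∫ s in (2*Real.pi)..(t + 2*Real.pi), Real.exp (A s))
        = ∫ s in (0:ℝ)..t, Real.exp (A (s + 2*Real.pi)) := by
      rw [intervalIntegral.integral_comp_add_right (fun s => Real.exp (A s)) (2*Real.pi)]
      norm_num
    have hcongr : (∫ s in (0:ℝ)..t, Real.exp (A (s + 2*Real.pi)))
        = ∫ s in (0:ℝ)..t, Real.exp (2*I) * Real.exp (A s) := by
      apply intervalIntegral.integral_congr
      intro s _
      show Real.exp (A (s + 2*Real.pi)) = Real.exp (2*I) * Real.exp (A s)
      rw [hAP s, add_comm, Real.exp_add]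
    rw [hsplit, hshift, hcongr, intervalIntegral.integral_const_mul]
  set lam : ℝ := Real.exp (2*I) with hlamdef
  have hlampos : 0 < lam := Real.exp_pos _
  have hlam1 : lam ≠ 1 := by
    intro h
    exact hI (by
      have h2 : Real.exp (2*I) = Real.exp 0 := by rw [← hlamdef, h, Real.exp_zero]
      have : (2:ℝ)*I = 0 := Real.exp_injective h2
      linarith)
  have h1lam : 1 - lam ≠ 0 := by intro h; exact hlam1 (by linarith)
  set y0 : ℝ := B (2*Real.pi) / (1 - lam) with hy0def
  have hy0ne : y0 ≠ 0 := div_ne_zero (ne_of_gt hBP) h1lam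
  set y : ℝ → ℝ := fun t => Real.exp (-A t) * (y0 - B t) with hydef
  have hy0val : y 0 = y0 := by simp [hydef, hA0, hB0]
  have hyper : Function.Periodic y (2*Real.pi) := by
    intro t
    have hkey : Real.exp (-(2*I)) * (y0 - B (2*Real.pi)) = y0 := by
      have h2 : y0 - B (2*Real.pi) = lam * y0 := by
        rw [hy0def]; field_simp; ring
      rw [h2, ← mul_assoc, ← Real.exp_add]
      simp [hlamdef, ← Real.exp_add]
    show Real.exp (-A (t + 2*Real.pi)) * (y0 - B (t + 2*Real.pi)) = Real.exp (-A t) * (y0 - B t)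
    rw [hAP, hBP']
    have : -(A t + 2*I) = -(2*I) + -A t := by ring
    rw [this, Real.exp_add]
    calc Real.exp (-(2*I)) * Real.exp (-A t) * (y0 - (B (2*Real.pi) + lam * B t))
        = Real.exp (-A t) * (Real.exp (-(2*I)) * (y0 - B (2*Real.pi))
            - Real.exp (-(2*I)) * lam * B t) := by ring
      _ = Real.exp (-A t) * (y0 - B t) := by
          rw [hkey]
          have : Real.exp (-(2*I)) * lam = 1 := by
            rw [hlamdef, ← Real.exp_add]; simp
          rw [this, one_mul]
  -- sign of y on [0, 2π]
  have hy_ne_Icc : ∀ t ∈ Set.Icc (0:ℝ) (2*Real.pi), y t ≠ 0 := by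
    intro t ht
    have hBt0 : 0 ≤ B t := by rw [← hB0]; exact hBmono.monotone ht.1
    have hBtP : B t ≤ B (2*Real.pi) := hBmono.monotone ht.2
    rcases lt_or_gt_of_ne hlam1 with hl | hl
    · -- lam < 1 : y0 > B 2π ≥ B t, y > 0
      have h1l : 0 < 1 - lam := by linarith
      have h1l' : 1 - lam < 1 := by linarith
      have : B (2*Real.pi) < y0 := by
        rw [hy0def]
        rw [lt_div_iff₀ h1l]
        nlinarith
      have : 0 < y t := by
        apply mul_pos (Real.exp_pos _)
        linarith
      linarith
    · -- lam > 1 : y0 < 0 ≤ B t, y < 0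
      have h1l : 1 - lam < 0 := by linarith
      have : y0 < 0 := div_neg_of_pos_of_neg hBP h1l
      have : y t < 0 := by
        have : y0 - B t < 0 := by linarith
        exact mul_neg_of_pos_of_neg (Real.exp_pos _) this
      linarith
  have hy_ne : ∀ t, y t ≠ 0 := by
    intro t
    have hred : y t = y (t - ⌊t / (2*Real.pi)⌋ * (2*Real.pi)) := (hyper.sub_int_mul_eq _).symm
    rw [hred]
    apply hy_ne_Icc
    constructor
    · exact Int.sub_floor_div_mul_nonneg t hπ
    · exact le_of_lt (Int.sub_floor_div_mul_lt t hπ)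
  -- derivative of y
  have hyd : ∀ t, HasDerivAt y (-(2 * z t) * y t - 1) t := by
    intro t
    have h1 : HasDerivAt (fun u => Real.exp (-A u)) (Real.exp (-A t) * (-(2 * z t))) t :=
      HasDerivAt.exp (hAd t).neg
    have h2 : HasDerivAt (fun u => y0 - B u) (-(Real.exp (A t))) t := by
      exact (hBd t).const_sub y0
    have h3 := h1.mul h2
    have heq : Real.exp (-A t) * (-(2*z t)) * (y0 - B t)
        + Real.exp (-A t) * (-(Real.exp (A t))) = -(2 * z t) * y t - 1 := by
      have : Real.exp (-A t) * Real.exp (A t) = 1 := by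
        rw [← Real.exp_add]; simp
      simp only [hydef]
      nlinarith [this]
    rw [heq] at h3
    exact h3
  clear_value y
  -- second solution
  set x2 : ℝ → ℝ := fun t => z t + (y t)⁻¹ with hx2def
  have hx2sol : IsSol η μ x2 := by
    constructor
    · intro t
      have hinv : HasDerivAt (fun u => (y u)⁻¹)
          (-(-(2 * z t) * y t - 1) / (y t)^2) t := (hyd t).inv (hy_ne t)
      have hsum := (hz.1 t).add hinv
      have heq : z t ^ 2 + gammaEtaHat η t + μ + -(-(2 * z t) * y t - 1) / (y t)^2
          = x2 t ^ 2 + gammaEtaHat η t + μ := by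
        simp only [hx2def]
        have hy1 : y t ≠ 0 := hy_ne t
        field_simp
        ring
      rw [heq] at hsum
      exact hsum
    · intro t
      simp only [hx2def]
      rw [hz.2 t, hyper t]
  have hcontra := huniq x2 hx2sol
  have : x2 0 = z 0 := by rw [hcontra]
  simp only [hx2def] at this
  have : (y 0)⁻¹ = 0 := by linarith
  exact (inv_ne_zero (hy_ne 0)) this

noncomputable def IFz (z : ℝ → ℝ) : ℝ → ℝ := fun t => Real.exp (-(2 * ∫ s in (0:ℝ)..t, z s))
noncomputable def Sv (z : ℝ → ℝ) : ℝ := ∫ t in (0:ℝ)..(2*Real.pi), Real.sin t * IFz z t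
noncomputable def Ev (z : ℝ → ℝ) : ℝ := ∫ t in (0:ℝ)..(2*Real.pi), IFz z t

lemma IFz_pos (z : ℝ → ℝ) (t : ℝ) : 0 < IFz z t := Real.exp_pos _

lemma IFz_hasDeriv {z : ℝ → ℝ} (hz : Continuous z) (t : ℝ) :
    HasDerivAt (IFz z) (-(2 * z t) * IFz z t) t := by
  have h1 : HasDerivAt (fun u => -(2 * ∫ s in (0:ℝ)..u, z s)) (-(2 * z t)) t :=
    ((primitive_hasDerivAt hz t).const_mul 2).neg
  have := h1.exp
  unfold IFz
  simpa [mul_comm] using this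

lemma IFz_cont {z : ℝ → ℝ} (hz : Continuous z) : Continuous (IFz z) :=
  continuous_iff_continuousAt.2 fun t => (IFz_hasDeriv hz t).continuousAt

lemma IFz_zero (z : ℝ → ℝ) : IFz z 0 = 1 := by simp [IFz]

lemma Ev_pos {z : ℝ → ℝ} (hz : Continuous z) : 0 < Ev z := by
  apply intervalIntegral.intervalIntegral_pos_of_pos
    ((IFz_cont hz).intervalIntegrable _ _) (IFz_pos z)
  positivity

lemma abs_Sv_le {z : ℝ → ℝ} (hz : Continuous z) : |Sv z| ≤ Ev z := by
  have hπ : (0:ℝ) ≤ 2*Real.pi := by positivity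
  have h1 : |Sv z| ≤ ∫ t in (0:ℝ)..(2*Real.pi), |Real.sin t * IFz z t| := by
    apply intervalIntegral.abs_integral_le_integral_abs hπ
  have h2 : (∫ t in (0:ℝ)..(2*Real.pi), |Real.sin t * IFz z t|) ≤ Ev z := by
    apply intervalIntegral.integral_mono_on hπ
      ((Real.continuous_sin.mul (IFz_cont hz)).abs.intervalIntegrable _ _)
      ((IFz_cont hz).intervalIntegrable _ _)
    intro x _
    rw [Pi.mul_apply, abs_mul, abs_of_pos (IFz_pos z x)]
    nlinarith [IFz_pos z x, Real.abs_sin_le_one x]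
  linarith

lemma key_identity {η ν η' μ : ℝ} {z φ : ℝ → ℝ} (hz : IsSol η ν z)
    (h0 : (∫ s in (0:ℝ)..(2*Real.pi), z s) = 0) (hφ : IsSol η' μ φ) :
    (∫ t in (0:ℝ)..(2*Real.pi), ((φ t - z t)^2 * IFz z t))
      + (η' - η) * Sv z + (μ - ν) * Ev z = 0 := by
  have hzc := sol_cont hz
  have hφc := sol_cont hφ
  have hwc : Continuous fun t => φ t - z t := hφc.sub hzc
  have hIFc := IFz_cont hzc
  set G : ℝ → ℝ := fun t => (φ t - z t) * IFz z t with hGdef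
  have hGd : ∀ t, HasDerivAt G
      (((φ t - z t)^2 + (η' - η) * Real.sin t + (μ - ν)) * IFz z t) t := by
    intro t
    have hw : HasDerivAt (fun u => φ u - z u)
        ((φ t ^ 2 + gammaEtaHat η' t + μ) - (z t ^ 2 + gammaEtaHat η t + ν)) t :=
      (hφ.1 t).sub (hz.1 t)
    have h3 := hw.mul (IFz_hasDeriv hzc t)
    have heq : (φ t ^ 2 + gammaEtaHat η' t + μ - (z t ^ 2 + gammaEtaHat η t + ν)) * IFz z t
        + (φ t - z t) * (-(2 * z t) * IFz z t)
        = ((φ t - z t)^2 + (η' - η) * Real.sin t + (μ - ν)) * IFz z t := by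
      rw [hat_sub η η' t]
      ring
    rw [heq] at h3
    exact h3
  have hintc : Continuous fun t => ((φ t - z t)^2 + (η' - η) * Real.sin t + (μ - ν)) * IFz z t := by
    apply Continuous.mul _ hIFc
    exact ((hwc.pow 2).add (continuous_const.mul Real.continuous_sin)).add continuous_const
  have hftc : (∫ t in (0:ℝ)..(2*Real.pi),
        ((φ t - z t)^2 + (η' - η) * Real.sin t + (μ - ν)) * IFz z t)
      = G (2*Real.pi) - G 0 :=
    intervalIntegral.integral_eq_sub_of_hasDerivAt (fun t _ => hGd t)
      (hintc.intervalIntegrable _ _)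
  have hGP : G (2*Real.pi) = G 0 := by
    have hIFP : IFz z (2*Real.pi) = 1 := by
      simp [IFz, h0]
    have hφP : φ (2*Real.pi) = φ 0 := by have := hφ.2 0; simpa using this
    have hzP : z (2*Real.pi) = z 0 := by have := hz.2 0; simpa using this
    simp [hGdef, hIFP, hφP, hzP, IFz_zero]
  rw [hGP, sub_self] at hftc
  -- split the integral
  have hsq : Continuous fun t => (φ t - z t)^2 * IFz z t := (hwc.pow 2).mul hIFc
  have hsin : Continuous fun t => Real.sin t * IFz z t := Real.continuous_sin.mul hIFc
  have hsplit : (∫ t in (0:ℝ)..(2*Real.pi),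
        ((φ t - z t)^2 + (η' - η) * Real.sin t + (μ - ν)) * IFz z t)
      = (∫ t in (0:ℝ)..(2*Real.pi), ((φ t - z t)^2 * IFz z t))
        + (η' - η) * Sv z + (μ - ν) * Ev z := by
    have hrw : (fun t => ((φ t - z t)^2 + (η' - η) * Real.sin t + (μ - ν)) * IFz z t)
        = fun t => (φ t - z t)^2 * IFz z t + ((η' - η) * (Real.sin t * IFz z t)
            + (μ - ν) * IFz z t) := by
      funext t; ring
    rw [hrw]
    rw [intervalIntegral.integral_add (f := fun t => (φ t - z t)^2 * IFz z t)
      (g := fun t => (η' - η) * (Real.sin t * IFz z t) + (μ - ν) * IFz z t)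
      (hsq.intervalIntegrable _ _)
      (((continuous_const.mul hsin).add (continuous_const.mul hIFc)).intervalIntegrable _ _)]
    rw [intervalIntegral.integral_add (f := fun t => (η' - η) * (Real.sin t * IFz z t))
      (g := fun t => (μ - ν) * IFz z t) ((continuous_const.mul hsin).intervalIntegrable _ _)
      ((continuous_const.mul hIFc).intervalIntegrable _ _)]
    rw [intervalIntegral.integral_const_mul, intervalIntegral.integral_const_mul]
    unfold Sv Ev
    ring
  rw [hsplit] at hftc
  exact hftc

lemma sq_int_nonneg {z φ : ℝ → ℝ} (hz : Continuous z) (hφ : Continuous φ) :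
    0 ≤ ∫ t in (0:ℝ)..(2*Real.pi), ((φ t - z t)^2 * IFz z t) := by
  apply intervalIntegral.integral_nonneg (by positivity)
  intro u _
  have := IFz_pos z u
  positivity

/-- supporting-line inequality -/
lemma key_le {η ν η' μ : ℝ} {z φ : ℝ → ℝ} (hz : IsSol η ν z)
    (h0 : (∫ s in (0:ℝ)..(2*Real.pi), z s) = 0) (hφ : IsSol η' μ φ) :
    μ ≤ ν + (-(Sv z / Ev z)) * (η' - η) := by
  have hid := key_identity hz h0 hφ
  have hW := sq_int_nonneg (sol_cont hz) (sol_cont hφ)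
  have hE := Ev_pos (sol_cont hz)
  have h1 : (μ - ν) * Ev z ≤ (η - η') * Sv z := by linarith
  have h2 : (-(Sv z / Ev z)) * (η' - η) * Ev z = (η - η') * Sv z := by
    field_simp
    ring
  nlinarith [hE, h1, h2]

/-- pointwise bound on the exponent -/
lemma exponent_bound {η ν : ℝ} {z : ℝ → ℝ} (hz : IsSol η ν z) :
    ∀ t ∈ Set.Icc (0:ℝ) (2*Real.pi), |2 * ∫ s in (0:ℝ)..t, z s| ≤ 2*Real.pi*(1 - ν) := by
  intro t ht
  have hzc := sol_cont hz
  have h1 : |2 * ∫ s in (0:ℝ)..t, z s| ≤ 2 * ∫ s in (0:ℝ)..t, |z s| := by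
    rw [abs_mul, abs_two]
    have := intervalIntegral.abs_integral_le_integral_abs (a := 0) (b := t) (f := z)
      (μ := MeasureTheory.volume) ht.1
    linarith
  have h2 : (∫ s in (0:ℝ)..t, |z s|) ≤ ∫ s in (0:ℝ)..(2*Real.pi), |z s| := by
    apply intervalIntegral.integral_mono_interval le_rfl ht.1 ht.2
    · filter_upwards with s using abs_nonneg _
    · exact hzc.abs.intervalIntegrable _ _
  have h3 : (∫ s in (0:ℝ)..(2*Real.pi), 2 * |z s|) ≤ ∫ s in (0:ℝ)..(2*Real.pi), ((z s)^2 + 1) := by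
    apply intervalIntegral.integral_mono_on (by positivity)
      ((hzc.abs.intervalIntegrable _ _).const_mul 2)
      (((hzc.pow 2).add continuous_const).intervalIntegrable _ _)
    intro s _
    show 2 * |z s| ≤ z s ^ 2 + 1
    nlinarith [sq_abs (z s), sq_nonneg (|z s| - 1)]
  have h4 : (∫ s in (0:ℝ)..(2*Real.pi), ((z s)^2 + 1)) = -(2*Real.pi*ν) + 2*Real.pi := by
    rw [intervalIntegral.integral_add (f := fun s => z s ^ 2) (g := fun _ => (1:ℝ))
      ((hzc.pow 2).intervalIntegrable _ _)
      intervalIntegrable_const, sol_sq_integral hz, intervalIntegral.integral_const]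
    simp
  rw [intervalIntegral.integral_const_mul] at h3
  calc |2 * ∫ s in (0:ℝ)..t, z s| ≤ 2 * ∫ s in (0:ℝ)..t, |z s| := h1
    _ ≤ 2 * ∫ s in (0:ℝ)..(2*Real.pi), |z s| := by linarith
    _ ≤ -(2*Real.pi*ν) + 2*Real.pi := by linarith
    _ = 2*Real.pi*(1-ν) := by ring

lemma IFz_mem_bounds {η ν : ℝ} {z : ℝ → ℝ} (hz : IsSol η ν z) :
    ∀ t ∈ Set.Icc (0:ℝ) (2*Real.pi),
      Real.exp (-(2*Real.pi*(1-ν))) ≤ IFz z t ∧ IFz z t ≤ Real.exp (2*Real.pi*(1-ν)) := by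
  intro t ht
  have h := exponent_bound hz t ht
  rw [abs_le] at h
  unfold IFz
  constructor
  · exact Real.exp_le_exp.mpr (by linarith [h.2])
  · exact Real.exp_le_exp.mpr (by linarith [h.1])

lemma Ev_le {η ν : ℝ} {z : ℝ → ℝ} (hz : IsSol η ν z) :
    Ev z ≤ 2*Real.pi * Real.exp (2*Real.pi*(1-ν)) := by
  have hzc := sol_cont hz
  have : Ev z ≤ ∫ t in (0:ℝ)..(2*Real.pi), Real.exp (2*Real.pi*(1-ν)) := by
    apply intervalIntegral.integral_mono_on (by positivity)
      ((IFz_cont hzc).intervalIntegrable _ _) intervalIntegrable_const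
    intro t ht
    exact (IFz_mem_bounds hz t ht).2
  rw [intervalIntegral.integral_const, smul_eq_mul, sub_zero] at this
  linarith

/-- L² distance of critical solutions -/
lemma zsq_diff {η ν η' ν' : ℝ} {z z' : ℝ → ℝ} (hz : IsSol η ν z)
    (h0 : (∫ s in (0:ℝ)..(2*Real.pi), z s) = 0) (hz' : IsSol η' ν' z')
    (hlip : |ν' - ν| ≤ |η' - η|) :
    (∫ t in (0:ℝ)..(2*Real.pi), (z' t - z t)^2)
      ≤ 4*Real.pi * Real.exp (2*(2*Real.pi*(1-ν))) * |η' - η| := by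
  have hzc := sol_cont hz
  have hz'c := sol_cont hz'
  have hid := key_identity hz h0 hz'
  set CA := 2*Real.pi*(1-ν) with hCA
  -- upper bound for the weighted square integral
  have hSle := abs_Sv_le hzc
  have hEub := Ev_le hz
  have hEpos := Ev_pos hzc
  have hW : (∫ t in (0:ℝ)..(2*Real.pi), ((z' t - z t)^2 * IFz z t))
      ≤ 2 * |η' - η| * Ev z := by
    have e1 : (η - η') * Sv z ≤ |η' - η| * Ev z := by
      have : (η - η') * Sv z ≤ |(η - η') * Sv z| := le_abs_self _
      rw [abs_mul] at this
      have h2 : |η - η'| = |η' - η| := abs_sub_comm _ _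
      nlinarith [abs_nonneg (η - η'), hSle, abs_nonneg (Sv z), hEpos]
    have e2 : (ν - ν') * Ev z ≤ |η' - η| * Ev z := by
      have : ν - ν' ≤ |ν' - ν| := by
        rw [abs_sub_comm]; exact le_abs_self _
      nlinarith [hEpos]
    linarith
  -- lower bound: W ≥ exp(-CA) ∮ (z'-z)²
  have hlb : Real.exp (-CA) * (∫ t in (0:ℝ)..(2*Real.pi), (z' t - z t)^2)
      ≤ ∫ t in (0:ℝ)..(2*Real.pi), ((z' t - z t)^2 * IFz z t) := by
    rw [← intervalIntegral.integral_const_mul]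
    apply intervalIntegral.integral_mono_on (by positivity)
      ((((hz'c.sub hzc).pow 2).intervalIntegrable _ _).const_mul _)
      ((((hz'c.sub hzc).pow 2).mul (IFz_cont hzc)).intervalIntegrable _ _)
    intro t ht
    have := (IFz_mem_bounds hz t ht).1
    show Real.exp (-CA) * (z' t - z t)^2 ≤ (z' t - z t)^2 * IFz z t
    nlinarith [sq_nonneg (z' t - z t)]
  have hEub' : 2 * |η' - η| * Ev z ≤ 2 * |η' - η| * (2*Real.pi * Real.exp CA) := by
    nlinarith [abs_nonneg (η' - η)]
  have hfin : Real.exp (-CA) * (∫ t in (0:ℝ)..(2*Real.pi), (z' t - z t)^2)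
      ≤ 4*Real.pi * Real.exp CA * |η' - η| := by
    calc Real.exp (-CA) * _ ≤ ∫ t in (0:ℝ)..(2*Real.pi), ((z' t - z t)^2 * IFz z t) := hlb
      _ ≤ 2 * |η' - η| * Ev z := hW
      _ ≤ 2 * |η' - η| * (2*Real.pi * Real.exp CA) := hEub'
      _ = 4*Real.pi * Real.exp CA * |η' - η| := by ring
  have hexp : Real.exp (-CA) > 0 := Real.exp_pos _
  have h2 : (∫ t in (0:ℝ)..(2*Real.pi), (z' t - z t)^2)
      ≤ 4*Real.pi * Real.exp CA * |η' - η| / Real.exp (-CA) := by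
    rw [le_div_iff₀ hexp, mul_comm]
    exact hfin
  calc (∫ t in (0:ℝ)..(2*Real.pi), (z' t - z t)^2)
      ≤ 4*Real.pi * Real.exp CA * |η' - η| / Real.exp (-CA) := h2
    _ = 4*Real.pi * (Real.exp CA / Real.exp (-CA)) * |η' - η| := by ring
    _ = 4*Real.pi * Real.exp (2*CA) * |η' - η| := by
        rw [← Real.exp_sub, show CA - -CA = 2*CA by ring]

lemma exp_diff_le {a b M : ℝ} (ha : |a| ≤ M) (hb : |b| ≤ M) :
    |Real.exp a - Real.exp b| ≤ Real.exp M * |a - b| := by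
  wlog hab : b ≤ a generalizing a b
  · rw [abs_sub_comm, abs_sub_comm a b]
    exact this hb ha (le_of_not_ge hab)
  have h1 : Real.exp b ≤ Real.exp a := Real.exp_le_exp.mpr hab
  rw [abs_of_nonneg (by linarith), abs_of_nonneg (by linarith)]
  have h2 : (b - a) + 1 ≤ Real.exp (b - a) := Real.add_one_le_exp _
  have h3 : Real.exp a * Real.exp (b - a) = Real.exp b := by
    rw [← Real.exp_add]; ring_nf
  have h4 : Real.exp a ≤ Real.exp M := Real.exp_le_exp.mpr (le_of_abs_le ha)
  nlinarith [Real.exp_pos a, mul_le_mul_of_nonneg_right h4 (sub_nonneg.mpr hab)]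

/-- pointwise bound for the difference of integrating factors -/
lemma IF_diff_bound {η ν η' ν' : ℝ} {z z' : ℝ → ℝ} (hz : IsSol η ν z)
    (h0 : (∫ s in (0:ℝ)..(2*Real.pi), z s) = 0) (hz' : IsSol η' ν' z')
    (hlip : |ν' - ν| ≤ |η' - η|) (hd : |η' - η| ≤ 1) {ε' : ℝ} (hε' : 0 < ε') :
    ∀ t ∈ Set.Icc (0:ℝ) (2*Real.pi),
      |IFz z' t - IFz z t| ≤ Real.exp (2*Real.pi*(1-ν) + 2*Real.pi)
        * (4*Real.pi * Real.exp (2*(2*Real.pi*(1-ν))) * |η' - η| / ε' + 2*Real.pi*ε') := by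
  intro t ht
  have hzc := sol_cont hz
  have hz'c := sol_cont hz'
  set M : ℝ := 2*Real.pi*(1-ν) + 2*Real.pi with hM
  set K : ℝ := 4*Real.pi * Real.exp (2*(2*Real.pi*(1-ν))) with hK
  have hKd := zsq_diff hz h0 hz' hlip
  have ha : |(-(2 * ∫ s in (0:ℝ)..t, z' s))| ≤ M := by
    rw [abs_neg]
    have h1 := exponent_bound hz' t ht
    have h2 : ν - 1 ≤ ν' := by linarith [neg_abs_le (ν' - ν), hlip, hd]
    have h3 : 2*Real.pi*(1-ν') ≤ M := by rw [hM]; nlinarith [Real.pi_pos]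
    linarith
  have hb : |(-(2 * ∫ s in (0:ℝ)..t, z s))| ≤ M := by
    rw [abs_neg]
    have h1 := exponent_bound hz t ht
    have h3 : 2*Real.pi*(1-ν) ≤ M := by rw [hM]; nlinarith [Real.pi_pos]
    linarith
  have hΔA : |(-(2 * ∫ s in (0:ℝ)..t, z' s)) - (-(2 * ∫ s in (0:ℝ)..t, z s))|
      ≤ K * |η' - η| / ε' + 2*Real.pi*ε' := by
    have hw : (-(2 * ∫ s in (0:ℝ)..t, z' s)) - (-(2 * ∫ s in (0:ℝ)..t, z s))
        = -(2 * ∫ s in (0:ℝ)..t, (z' s - z s)) := by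
      rw [intervalIntegral.integral_sub (hz'c.intervalIntegrable _ _)
        (hzc.intervalIntegrable _ _)]
      ring
    rw [hw, abs_neg, abs_mul, abs_two]
    have e1 : |∫ s in (0:ℝ)..t, (z' s - z s)| ≤ ∫ s in (0:ℝ)..t, |z' s - z s| :=
      intervalIntegral.abs_integral_le_integral_abs (μ := MeasureTheory.volume) ht.1
    have e2 : (∫ s in (0:ℝ)..t, |z' s - z s|) ≤ ∫ s in (0:ℝ)..(2*Real.pi), |z' s - z s| := by
      apply intervalIntegral.integral_mono_interval le_rfl ht.1 ht.2
      · filter_upwards with s using abs_nonneg _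
      · exact (hz'c.sub hzc).abs.intervalIntegrable _ _
    have e3 : (∫ s in (0:ℝ)..(2*Real.pi), 2 * |z' s - z s|)
        ≤ ∫ s in (0:ℝ)..(2*Real.pi), ((z' s - z s)^2 / ε' + ε') := by
      apply intervalIntegral.integral_mono_on (by positivity)
        (((hz'c.sub hzc).abs.intervalIntegrable _ _).const_mul 2)
        (((((hz'c.sub hzc).pow 2).div_const ε').add continuous_const).intervalIntegrable _ _)
      intro s _
      have h5 : 0 ≤ (|z' s - z s| - ε')^2 := sq_nonneg _
      have h6 : (|z' s - z s|)^2 = (z' s - z s)^2 := sq_abs _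
      show 2 * |z' s - z s| ≤ (z' s - z s)^2 / ε' + ε'
      rw [div_add' _ _ _ (ne_of_gt hε'), le_div_iff₀ hε']
      nlinarith
    have e4 : (∫ s in (0:ℝ)..(2*Real.pi), ((z' s - z s)^2 / ε' + ε'))
        = (∫ s in (0:ℝ)..(2*Real.pi), (z' s - z s)^2) / ε' + 2*Real.pi*ε' := by
      rw [intervalIntegral.integral_add (f := fun s => (z' s - z s)^2 / ε') (g := fun _ => ε')
        ((((hz'c.sub hzc).pow 2).div_const ε').intervalIntegrable _ _)
        intervalIntegrable_const,
        intervalIntegral.integral_div, intervalIntegral.integral_const]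
      simp [smul_eq_mul]
      try ring
    have e5 : (∫ s in (0:ℝ)..(2*Real.pi), 2 * |z' s - z s|)
        = 2 * ∫ s in (0:ℝ)..(2*Real.pi), |z' s - z s| :=
      intervalIntegral.integral_const_mul _ _
    have e6 : (∫ s in (0:ℝ)..(2*Real.pi), (z' s - z s)^2) / ε' ≤ K * |η' - η| / ε' :=
      (div_le_div_iff_of_pos_right hε').mpr hKd
    calc 2 * |∫ s in (0:ℝ)..t, (z' s - z s)| ≤ 2 * ∫ s in (0:ℝ)..t, |z' s - z s| := by linarith
      _ ≤ 2 * ∫ s in (0:ℝ)..(2*Real.pi), |z' s - z s| := by linarith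
      _ = ∫ s in (0:ℝ)..(2*Real.pi), 2 * |z' s - z s| := e5.symm
      _ ≤ ∫ s in (0:ℝ)..(2*Real.pi), ((z' s - z s)^2 / ε' + ε') := e3
      _ = (∫ s in (0:ℝ)..(2*Real.pi), (z' s - z s)^2) / ε' + 2*Real.pi*ε' := e4
      _ ≤ K * |η' - η| / ε' + 2*Real.pi*ε' := by linarith
  -- conclude
  have hfinal := exp_diff_le ha hb
  have hexpM : (0:ℝ) < Real.exp M := Real.exp_pos _
  have : |IFz z' t - IFz z t| ≤ Real.exp M * |(-(2 * ∫ s in (0:ℝ)..t, z' s)) - (-(2 * ∫ s in (0:ℝ)..t, z s))| := by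
    unfold IFz
    exact hfinal
  calc |IFz z' t - IFz z t|
      ≤ Real.exp M * |(-(2 * ∫ s in (0:ℝ)..t, z' s)) - (-(2 * ∫ s in (0:ℝ)..t, z s))| := this
    _ ≤ Real.exp M * (K * |η' - η| / ε' + 2*Real.pi*ε') := by
        apply mul_le_mul_of_nonneg_left hΔA (le_of_lt hexpM)

lemma SvEv_diff {η ν η' ν' : ℝ} {z z' : ℝ → ℝ} (hz : IsSol η ν z)
    (h0 : (∫ s in (0:ℝ)..(2*Real.pi), z s) = 0) (hz' : IsSol η' ν' z')
    (hlip : |ν' - ν| ≤ |η' - η|) (hd : |η' - η| ≤ 1) {ε' : ℝ} (hε' : 0 < ε') :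
    |Ev z' - Ev z| ≤ 2*Real.pi * (Real.exp (2*Real.pi*(1-ν) + 2*Real.pi)
        * (4*Real.pi * Real.exp (2*(2*Real.pi*(1-ν))) * |η' - η| / ε' + 2*Real.pi*ε'))
    ∧ |Sv z' - Sv z| ≤ 2*Real.pi * (Real.exp (2*Real.pi*(1-ν) + 2*Real.pi)
        * (4*Real.pi * Real.exp (2*(2*Real.pi*(1-ν))) * |η' - η| / ε' + 2*Real.pi*ε')) := by
  have hzc := sol_cont hz
  have hz'c := sol_cont hz'
  set R : ℝ := Real.exp (2*Real.pi*(1-ν) + 2*Real.pi)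
        * (4*Real.pi * Real.exp (2*(2*Real.pi*(1-ν))) * |η' - η| / ε' + 2*Real.pi*ε') with hR
  have hbd := IF_diff_bound hz h0 hz' hlip hd hε'
  have habs : ∀ (g : ℝ → ℝ), Continuous g → (∀ t ∈ Set.Icc (0:ℝ) (2*Real.pi), |g t| ≤ 1) →
      |(∫ t in (0:ℝ)..(2*Real.pi), g t * (IFz z' t - IFz z t))| ≤ 2*Real.pi * R := by
    intro g hg hg1
    have hπ : (0:ℝ) ≤ 2*Real.pi := by positivity
    have hc : Continuous fun t => g t * (IFz z' t - IFz z t) :=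
      hg.mul ((IFz_cont hz'c).sub (IFz_cont hzc))
    have h1 : |(∫ t in (0:ℝ)..(2*Real.pi), g t * (IFz z' t - IFz z t))|
        ≤ ∫ t in (0:ℝ)..(2*Real.pi), |g t * (IFz z' t - IFz z t)| :=
      intervalIntegral.abs_integral_le_integral_abs (μ := MeasureTheory.volume) hπ
    have h2 : (∫ t in (0:ℝ)..(2*Real.pi), |g t * (IFz z' t - IFz z t)|)
        ≤ ∫ t in (0:ℝ)..(2*Real.pi), R := by
      apply intervalIntegral.integral_mono_on hπ (hc.abs.intervalIntegrable _ _)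
        intervalIntegrable_const
      intro t ht
      rw [abs_mul]
      have := hbd t ht
      have := hg1 t ht
      nlinarith [abs_nonneg (g t), abs_nonneg (IFz z' t - IFz z t)]
    rw [intervalIntegral.integral_const, smul_eq_mul, sub_zero] at h2
    linarith
  constructor
  · have h := habs (fun _ => 1) continuous_const (by intro t _; simp)
    have heq : (∫ t in (0:ℝ)..(2*Real.pi), (1:ℝ) * (IFz z' t - IFz z t)) = Ev z' - Ev z := by
      simp only [one_mul]
      rw [intervalIntegral.integral_sub ((IFz_cont hz'c).intervalIntegrable _ _)
        ((IFz_cont hzc).intervalIntegrable _ _)]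
      rfl
    rw [heq] at h
    exact h
  · have h := habs Real.sin Real.continuous_sin (by intro t _; exact Real.abs_sin_le_one t)
    have heq : (∫ t in (0:ℝ)..(2*Real.pi), Real.sin t * (IFz z' t - IFz z t)) = Sv z' - Sv z := by
      have : (fun t => Real.sin t * (IFz z' t - IFz z t))
          = fun t => Real.sin t * IFz z' t - Real.sin t * IFz z t := by
        funext t; ring
      rw [this, intervalIntegral.integral_sub (f := fun t => Real.sin t * IFz z' t)
        (g := fun t => Real.sin t * IFz z t)
        ((Real.continuous_sin.mul (IFz_cont hz'c)).intervalIntegrable _ _)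
        ((Real.continuous_sin.mul (IFz_cont hzc)).intervalIntegrable _ _)]
      rfl
    rw [heq] at h
    exact h

theorem stmt_17 (μs : ℝ → ℝ)
    -- μ*(η) is the unique value of μ at which there is exactly one 2π-periodic solution
    (hchar : ∀ η μ : ℝ, (∃! φ : ℝ → ℝ, IsSol η μ φ) ↔ μ = μs η)
    -- two 2π-periodic solutions when μ < μ*(η)
    (htwo : ∀ η : ℝ, ∀ μ < μs η, ∃ φ ψ : ℝ → ℝ, φ ≠ ψ ∧ IsSol η μ φ ∧ IsSol η μ ψ)
    -- none when μ > μ*(η)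
    (hnone : ∀ η : ℝ, ∀ μ > μs η, ¬ ∃ φ : ℝ → ℝ, IsSol η μ φ) :
    Differentiable ℝ μs ∧ ConcaveOn ℝ Set.univ μs := by
  classical
  choose z hz hu using fun η => (hchar η (μs η)).mpr rfl
  have h0 : ∀ η, (∫ s in (0:ℝ)..(2 * Real.pi), z η s) = 0 :=
    fun η => mean_zero_of_unique (hz η) (hu η)
  obtain ⟨p, hpη⟩ : ∃ p : ℝ → ℝ, ∀ η, p η = -(Sv (z η) / Ev (z η)) :=
    ⟨fun η => -(Sv (z η) / Ev (z η)), fun _ => rfl⟩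
  have hEpos : ∀ η, 0 < Ev (z η) := fun η => Ev_pos (sol_cont (hz η))
  have hp1 : ∀ η, |p η| ≤ 1 := by
    intro η
    rw [hpη η, abs_neg, abs_div, abs_of_pos (hEpos η), div_le_one (hEpos η)]
    exact abs_Sv_le (sol_cont (hz η))
  have hsupp : ∀ η η', μs η' ≤ μs η + p η * (η' - η) := by
    intro η η'
    by_contra hcon
    push_neg at hcon
    obtain ⟨φ, ψ, hne, hφ, hψ⟩ := htwo η' ((μs η + p η * (η' - η) + μs η') / 2) (by linarith)
    have hk := key_le (hz η) (h0 η) hφ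
    rw [← hpη η] at hk
    linarith
  have hlipμ : ∀ η η', |μs η' - μs η| ≤ |η' - η| := by
    intro η η'
    have h1 := hsupp η η'
    have h2 := hsupp η' η
    have e1 : p η * (η' - η) ≤ |η' - η| :=
      calc p η * (η' - η) ≤ |p η * (η' - η)| := le_abs_self _
        _ = |p η| * |η' - η| := abs_mul _ _
        _ ≤ 1 * |η' - η| := mul_le_mul_of_nonneg_right (hp1 η) (abs_nonneg _)
        _ = |η' - η| := one_mul _
    have e2 : p η' * (η - η') ≤ |η' - η| :=
      calc p η' * (η - η') ≤ |p η' * (η - η')| := le_abs_self _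
        _ = |p η'| * |η - η'| := abs_mul _ _
        _ ≤ 1 * |η - η'| := mul_le_mul_of_nonneg_right (hp1 η') (abs_nonneg _)
        _ = |η' - η| := by rw [one_mul, abs_sub_comm]
    rw [abs_le]
    constructor <;> linarith
  have hconc : ConcaveOn ℝ Set.univ μs := by
    refine ⟨convex_univ, fun x _ y _ a b ha hb hab => ?_⟩
    simp only [smul_eq_mul]
    have h1 := hsupp (a*x + b*y) x
    have h2 := hsupp (a*x + b*y) y
    have e1 : a * μs x ≤ a * (μs (a*x+b*y) + p (a*x+b*y) * (x - (a*x+b*y))) :=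
      mul_le_mul_of_nonneg_left h1 ha
    have e2 : b * μs y ≤ b * (μs (a*x+b*y) + p (a*x+b*y) * (y - (a*x+b*y))) :=
      mul_le_mul_of_nonneg_left h2 hb
    have hb' : b = 1 - a := by linarith
    subst hb'
    have hsum : a * (μs (a*x+(1-a)*y) + p (a*x+(1-a)*y) * (x - (a*x+(1-a)*y)))
        + (1-a) * (μs (a*x+(1-a)*y) + p (a*x+(1-a)*y) * (y - (a*x+(1-a)*y)))
        = μs (a*x+(1-a)*y) := by ring
    linarith
  -- continuity of p
  have hSEcont : ∀ η₀, ContinuousAt (fun η => Sv (z η)) η₀ ∧ ContinuousAt (fun η => Ev (z η)) η₀ := by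
    intro η₀
    have key : ∀ ε > 0, ∃ δ > 0, ∀ η', |η' - η₀| < δ →
        |Sv (z η') - Sv (z η₀)| < ε ∧ |Ev (z η') - Ev (z η₀)| < ε := by
      intro ε hε
      set C1 : ℝ := 2*Real.pi * Real.exp (2*Real.pi*(1 - μs η₀) + 2*Real.pi) with hC1
      set K : ℝ := 4*Real.pi * Real.exp (2*(2*Real.pi*(1 - μs η₀))) with hKdef
      have hC1pos : 0 < C1 := by rw [hC1]; positivity
      have hKpos : 0 < K := by rw [hKdef]; positivity
      set a : ℝ := C1 * K with hadef
      set bb : ℝ := 2*Real.pi * C1 with hbbdef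
      have hapos : 0 < a := by rw [hadef]; positivity
      have hbbpos : 0 < bb := by rw [hbbdef]; positivity
      set ε' : ℝ := ε / (2*bb + 1) with hε'def
      have hε' : 0 < ε' := by rw [hε'def]; positivity
      set δ : ℝ := min 1 (ε * ε' / (2*a + 1)) with hδdef
      have hδpos : 0 < δ := by rw [hδdef]; positivity
      refine ⟨δ, hδpos, ?_⟩
      intro η' hd'
      have hd1 : |η' - η₀| ≤ 1 := le_of_lt (lt_of_lt_of_le hd' (by rw [hδdef]; exact min_le_left _ _))
      have hdiff := SvEv_diff (hz η₀) (h0 η₀) (hz η') (hlipμ η₀ η') hd1 hε'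
      -- rewrite the bound
      have hrw : 2*Real.pi * (Real.exp (2*Real.pi*(1 - μs η₀) + 2*Real.pi)
          * (4*Real.pi * Real.exp (2*(2*Real.pi*(1 - μs η₀))) * |η' - η₀| / ε' + 2*Real.pi*ε'))
          = a * |η' - η₀| / ε' + bb * ε' := by
        rw [hadef, hbbdef, hC1, hKdef]
        field_simp
      have hX : a * |η' - η₀| / ε' < ε/2 := by
        have hd2 : |η' - η₀| * (2*a + 1) < ε * ε' := by
          have h3 : |η' - η₀| < ε * ε' / (2*a + 1) :=
            lt_of_lt_of_le hd' (by rw [hδdef]; exact min_le_right _ _)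
          rw [lt_div_iff₀ (by positivity)] at h3
          exact h3
        rw [div_lt_iff₀ hε']
        nlinarith [abs_nonneg (η' - η₀), mul_pos hε hε']
      have hY : bb * ε' < ε/2 := by
        rw [hε'def, ← mul_div_assoc, div_lt_iff₀ (by positivity : (0:ℝ) < 2*bb+1)]
        nlinarith [mul_pos hbbpos hε]
      rw [hrw] at hdiff
      exact ⟨by linarith [hdiff.2], by linarith [hdiff.1]⟩
    have hS : ContinuousAt (fun η => Sv (z η)) η₀ := by
      rw [Metric.continuousAt_iff]
      intro ε hε
      obtain ⟨δ, hδ, hh⟩ := key ε hε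
      exact ⟨δ, hδ, fun {η'} h' => by
        rw [Real.dist_eq] at h' ⊢
        exact (hh η' h').1⟩
    have hE : ContinuousAt (fun η => Ev (z η)) η₀ := by
      rw [Metric.continuousAt_iff]
      intro ε hε
      obtain ⟨δ, hδ, hh⟩ := key ε hε
      exact ⟨δ, hδ, fun {η'} h' => by
        rw [Real.dist_eq] at h' ⊢
        exact (hh η' h').2⟩
    exact ⟨hS, hE⟩
  have hpc : ∀ η₀, ContinuousAt p η₀ := by
    intro η₀
    have hfun : p = fun η => -(Sv (z η) / Ev (z η)) := funext hpη
    rw [hfun]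
    exact ((hSEcont η₀).1.div (hSEcont η₀).2 (ne_of_gt (hEpos η₀))).neg
  -- differentiability
  have hderiv : ∀ η₀, HasDerivAt μs (p η₀) η₀ := by
    intro η₀
    rw [hasDerivAt_iff_tendsto_slope]
    have hbnd : ∀ y, y ≠ η₀ → |slope μs η₀ y - p η₀| ≤ |p y - p η₀| := by
      intro y hy
      have hy' : y - η₀ ≠ 0 := sub_ne_zero.mpr hy
      have h1 := hsupp η₀ y
      have h2 := hsupp y η₀
      have hsl : slope μs η₀ y - p η₀ = (μs y - μs η₀ - p η₀ * (y - η₀)) / (y - η₀) := by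
        rw [slope_def_field]
        field_simp
      rw [hsl, abs_div, div_le_iff₀ (abs_pos.mpr hy')]
      have hub : μs y - μs η₀ - p η₀ * (y - η₀) ≤ 0 := by linarith
      have hlb : (p y - p η₀) * (y - η₀) ≤ μs y - μs η₀ - p η₀ * (y - η₀) := by
        have h2' : μs η₀ - μs y ≤ p y * (η₀ - y) := by linarith
        nlinarith [h2']
      have hmul : -(|p y - p η₀| * |y - η₀|) ≤ (p y - p η₀) * (y - η₀) := by
        have := neg_abs_le ((p y - p η₀) * (y - η₀))
        rw [abs_mul] at this
        linarith
      rw [abs_le]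
      constructor
      · linarith
      · nlinarith [abs_nonneg (p y - p η₀), abs_nonneg (y - η₀)]
    have htendp : Filter.Tendsto (fun y => |p y - p η₀|) (nhdsWithin η₀ {x | x ≠ η₀}) (nhds 0) := by
      have h1 : ContinuousAt (fun y => |p y - p η₀|) η₀ := ((hpc η₀).sub continuousAt_const).abs
      have h2 := h1.tendsto
      simp only [sub_self, abs_zero] at h2
      exact h2.mono_left nhdsWithin_le_nhds
    have hsq : Filter.Tendsto (fun y => slope μs η₀ y - p η₀) (nhdsWithin η₀ {x | x ≠ η₀}) (nhds 0) := by
      apply squeeze_zero_norm' ?_ htendp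
      filter_upwards [self_mem_nhdsWithin] with y hy
      exact hbnd y hy
    have := hsq.add (tendsto_const_nhds (x := p η₀))
    simp at this; exact this
  exact ⟨fun η => (hderiv η).differentiableAt, hconc⟩
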